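/- arXiv:2302.04941 — 3 statements merged into one kernel-verified Lean document; each statement's English description precedes it below -/
import Mathlib

section
/- Suppose f : ℝ → ℝ is continuous on [a-δ, a+δ], f(a) = 0, and |f'(x)| ≥ 2ε₀ on [a-δ, a+δ] for some ε₀ > 0 with f differentiable there. If g is C¹ with sup over [a-δ,a+δ] of |g - f| + |g' - f'| < ε where 0 < ε < min(ε₀, δ·ε₀), then g has exactly one zero in (a-δ, a+δ), and that zero is hyperbolic (g' ≠ 0 there). -/
lemma key_mono_zero (g : ℝ → ℝ) (a δ ε₀ : ℝ) (hδ : 0 < δ) (hε₀ : 0 < ε₀)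
    (hg : ContDiff ℝ 1 g) (hga : |g a| < δ * ε₀)
    (hd : ∀ x ∈ Set.Icc (a - δ) (a + δ), ε₀ < deriv g x) :
    ∃! y, y ∈ Set.Ioo (a - δ) (a + δ) ∧ g y = 0 := by
  have hdiff : ∀ x : ℝ, HasDerivAt g (deriv g x) x := fun x =>
    ((hg.differentiable one_ne_zero) x).hasDerivAt
  have hcont : Continuous g := hg.continuous
  -- strict mono on Icc
  have hmono : StrictMonoOn g (Set.Icc (a - δ) (a + δ)) := by
    apply strictMonoOn_of_deriv_pos (convex_Icc _ _) (hcont.continuousOn)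
    intro x hx
    rw [interior_Icc] at hx
    exact lt_trans hε₀ (hd x (Set.Ioo_subset_Icc_self hx))
  -- lower bound at right endpoint
  have h1 : a - δ < a := by linarith
  have h2 : a < a + δ := by linarith
  have hga' : -(δ * ε₀) < g a ∧ g a < δ * ε₀ := abs_lt.mp hga
  have hright : 0 < g (a + δ) := by
    obtain ⟨c, hc, hceq⟩ := exists_hasDerivAt_eq_slope g (deriv g) h2
      (hcont.continuousOn) (fun x _ => hdiff x)
    have hcmem : c ∈ Set.Icc (a - δ) (a + δ) :=
      ⟨by linarith [hc.1], le_of_lt hc.2⟩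
    have := hd c hcmem
    rw [hceq] at this
    have hd' : a + δ - a = δ := by ring
    rw [hd'] at this
    have : ε₀ * δ < g (a + δ) - g a := by
      have := (lt_div_iff₀ hδ).mp this
      linarith
    nlinarith [hga'.1]
  have hleft : g (a - δ) < 0 := by
    obtain ⟨c, hc, hceq⟩ := exists_hasDerivAt_eq_slope g (deriv g) h1
      (hcont.continuousOn) (fun x _ => hdiff x)
    have hcmem : c ∈ Set.Icc (a - δ) (a + δ) :=
      ⟨le_of_lt hc.1, by linarith [hc.2]⟩
    have := hd c hcmem
    rw [hceq] at this
    have hd' : a - (a - δ) = δ := by ring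
    rw [hd'] at this
    have : ε₀ * δ < g a - g (a - δ) := by
      have := (lt_div_iff₀ hδ).mp this
      linarith
    nlinarith [hga'.2]
  -- existence via IVT
  obtain ⟨y, hy, hgy⟩ : ∃ y ∈ Set.Ioo (a - δ) (a + δ), g y = 0 := by
    have := intermediate_value_Ioo (le_of_lt (by linarith : a - δ < a + δ))
      (hcont.continuousOn (s := Set.Icc (a - δ) (a + δ)))
    have h0 : (0 : ℝ) ∈ Set.Ioo (g (a - δ)) (g (a + δ)) := ⟨hleft, hright⟩
    obtain ⟨y, hy, hgy⟩ := this h0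
    exact ⟨y, hy, hgy⟩
  refine ⟨y, ⟨hy, hgy⟩, ?_⟩
  rintro z ⟨hz, hgz⟩
  exact hmono.injOn (Set.Ioo_subset_Icc_self hz) (Set.Ioo_subset_Icc_self hy)
    (by rw [hgz, hgy])

theorem perturbed_unique_hyperbolic_zero (f g : ℝ → ℝ) (a δ ε₀ ε : ℝ)
    (hδ : 0 < δ) (hε₀ : 0 < ε₀)
    (hf : ContDiffOn ℝ 1 f (Set.Icc (a - δ) (a + δ)))
    (hg : ContDiff ℝ 1 g)
    (hza : f a = 0)
    (hd : ∀ x ∈ Set.Icc (a - δ) (a + δ), 2 * ε₀ ≤ |deriv f x|)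
    (hε : 0 < ε ∧ ε < min ε₀ (δ * ε₀))
    (hclose : ∀ x ∈ Set.Icc (a - δ) (a + δ),
      |g x - f x| + |deriv g x - deriv f x| < ε) :
    (∃! y, y ∈ Set.Ioo (a - δ) (a + δ) ∧ g y = 0) ∧
      ∀ y ∈ Set.Ioo (a - δ) (a + δ), g y = 0 → deriv g y ≠ 0 := by
  obtain ⟨hεpos, hεlt⟩ := hε
  have hε1 : ε < ε₀ := lt_of_lt_of_le hεlt (min_le_left _ _)
  have hε2 : ε < δ * ε₀ := lt_of_lt_of_le hεlt (min_le_right _ _)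
  have haI : a ∈ Set.Icc (a - δ) (a + δ) := ⟨by linarith, by linarith⟩
  -- |deriv g| > ε₀ on the interval
  have hdg : ∀ x ∈ Set.Icc (a - δ) (a + δ), ε₀ < |deriv g x| := by
    intro x hx
    have h1 := hd x hx
    have h2 := hclose x hx
    have h3 : |deriv g x - deriv f x| < ε := by
      have := abs_nonneg (g x - f x); linarith
    have := abs_sub_abs_le_abs_sub (deriv f x) (deriv g x)
    rw [abs_sub_comm] at this
    linarith
  -- |g a| < δ * ε₀
  have hga : |g a| < δ * ε₀ := by
    have h2 := hclose a haI
    have h3 : |g a - f a| < ε := by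
      have := abs_nonneg (deriv g a - deriv f a); linarith
    rw [hza, sub_zero] at h3
    linarith
  -- deriv g is continuous and nonzero on the connected Icc, hence constant sign
  have hcd : Continuous (deriv g) := hg.continuous_deriv le_rfl
  have hsign : (∀ x ∈ Set.Icc (a - δ) (a + δ), ε₀ < deriv g x) ∨
      (∀ x ∈ Set.Icc (a - δ) (a + δ), deriv g x < -ε₀) := by
    have habs : ∀ x ∈ Set.Icc (a - δ) (a + δ), ε₀ < deriv g x ∨ deriv g x < -ε₀ := by
      intro x hx
      rcases lt_or_ge (deriv g x) 0 with h | h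
      · right; have := hdg x hx; rw [abs_of_neg h] at this; linarith
      · left; have := hdg x hx; rw [abs_of_nonneg h] at this; exact this
    have hnz : ∀ x ∈ Set.Icc (a - δ) (a + δ), deriv g x ≠ 0 := by
      intro x hx h0
      have := hdg x hx; rw [h0, abs_zero] at this; linarith
    rcases habs a haI with hpos | hneg
    · left
      intro x hx
      rcases habs x hx with h | h
      · exact h
      · exfalso
        -- IVT on deriv g between x and a gives a zero
        rcases le_total x a with hxa | hax
        · have := intermediate_value_Icc hxa (hcd.continuousOn)
          have h0 : (0:ℝ) ∈ Set.Icc (deriv g x) (deriv g a) :=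
            ⟨by linarith, by linarith⟩
          obtain ⟨c, hc, hceq⟩ := this h0
          have hcmem : c ∈ Set.Icc (a - δ) (a + δ) :=
            ⟨le_trans hx.1 hc.1, le_trans hc.2 haI.2⟩
          exact hnz c hcmem hceq
        · have := intermediate_value_Icc' hax (hcd.continuousOn)
          have h0 : (0:ℝ) ∈ Set.Icc (deriv g x) (deriv g a) :=
            ⟨by linarith, by linarith⟩
          obtain ⟨c, hc, hceq⟩ := this h0
          have hcmem : c ∈ Set.Icc (a - δ) (a + δ) :=
            ⟨le_trans haI.1 hc.1, le_trans hc.2 hx.2⟩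
          exact hnz c hcmem hceq
    · right
      intro x hx
      rcases habs x hx with h | h
      · exfalso
        rcases le_total x a with hxa | hax
        · have := intermediate_value_Icc' hxa (hcd.continuousOn)
          have h0 : (0:ℝ) ∈ Set.Icc (deriv g a) (deriv g x) :=
            ⟨by linarith, by linarith⟩
          obtain ⟨c, hc, hceq⟩ := this h0
          have hcmem : c ∈ Set.Icc (a - δ) (a + δ) :=
            ⟨le_trans hx.1 hc.1, le_trans hc.2 haI.2⟩
          exact (by have := hdg c hcmem; rw [hceq, abs_zero] at this; linarith : False)
        · have := intermediate_value_Icc hax (hcd.continuousOn)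
          have h0 : (0:ℝ) ∈ Set.Icc (deriv g a) (deriv g x) :=
            ⟨by linarith, by linarith⟩
          obtain ⟨c, hc, hceq⟩ := this h0
          have hcmem : c ∈ Set.Icc (a - δ) (a + δ) :=
            ⟨le_trans haI.1 hc.1, le_trans hc.2 hx.2⟩
          exact (by have := hdg c hcmem; rw [hceq, abs_zero] at this; linarith : False)
      · exact h
  constructor
  · rcases hsign with hpos | hneg
    · exact key_mono_zero g a δ ε₀ hδ hε₀ hg hga hpos
    · -- apply to -g
      have hderiv_neg : ∀ x : ℝ, deriv (fun t => -g t) x = -deriv g x := by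
        intro x
        simpa using (((hg.differentiable one_ne_zero) x).hasDerivAt.neg).deriv
      have hkey := key_mono_zero (fun t => -g t) a δ ε₀ hδ hε₀ hg.neg
        (by simpa [abs_neg] using hga)
        (by intro x hx; rw [hderiv_neg]; linarith [hneg x hx])
      obtain ⟨y, ⟨hy, hgy⟩, huniq⟩ := hkey
      refine ⟨y, ⟨hy, by simpa [neg_eq_zero] using hgy⟩, ?_⟩
      rintro z ⟨hz, hgz⟩
      exact huniq z ⟨hz, by simp [hgz]⟩
  · intro y hy hgy h0
    have := hdg y (Set.Ioo_subset_Icc_self hy)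
    rw [h0, abs_zero] at this
    linarith
end

section
/- If f : ℝ → ℝ is C¹ with f(x*) = 0, f'(x*) = 0, and f > 0 on a punctured neighborhood (x*-δ, x*+δ) \ {x*}, then for every ε > 0 there exists a C¹ function g with sup|g-f| + sup|g'-f'| < ε, g = f outside (x*-δ, x*+δ), and g > 0 on all of (x*-δ, x*+δ). -/
theorem annihilate_nonhyperbolic_same_sign (f : ℝ → ℝ) (x₀ δ : ℝ)
    (hδ : 0 < δ) (hf : ContDiff ℝ 1 f)
    (hz : f x₀ = 0) (hd : deriv f x₀ = 0)
    (hpos : ∀ x ∈ Set.Ioo (x₀ - δ) (x₀ + δ), x ≠ x₀ → 0 < f x) :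
    ∀ ε > (0 : ℝ), ∃ g : ℝ → ℝ, ContDiff ℝ 1 g ∧
      (⨆ x : ℝ, |g x - f x|) + (⨆ x : ℝ, |deriv g x - deriv f x|) < ε ∧
      (∀ x, x ∉ Set.Ioo (x₀ - δ) (x₀ + δ) → g x = f x) ∧
      ∀ x ∈ Set.Ioo (x₀ - δ) (x₀ + δ), 0 < g x := by
  intro ε hε
  set φ : ContDiffBump x₀ := ⟨δ/2, 3*δ/4, by linarith, by linarith⟩
  have hψc : ContDiff ℝ 1 (φ : ℝ → ℝ) := φ.contDiff
  have hψd : Differentiable ℝ (φ : ℝ → ℝ) := hψc.differentiable one_ne_zero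
  have hderivcont : Continuous (deriv (φ : ℝ → ℝ)) := hψc.continuous_deriv le_rfl
  have hcs : HasCompactSupport (deriv (φ : ℝ → ℝ)) := φ.hasCompactSupport.deriv
  obtain ⟨M, hM⟩ := hcs.exists_bound_of_continuous hderivcont
  have hM0 : 0 ≤ M := le_trans (norm_nonneg _) (hM 0)
  set σ : ℝ := ε / (2 * (M + 1)) with hσdef
  have hσpos : 0 < σ := div_pos hε (by linarith)
  refine ⟨fun x => f x + σ * φ x, hf.add (contDiff_const.mul hψc), ?_, ?_, ?_⟩
  · have hderiv : ∀ x, deriv (fun x => f x + σ * φ x) x = deriv f x + σ * deriv (φ : ℝ → ℝ) x := by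
      intro x
      rw [deriv_fun_add (hf.differentiable one_ne_zero x) ((hψd x).const_mul σ),
        deriv_const_mul σ (hψd x)]
    have h1 : (⨆ x : ℝ, |(fun x => f x + σ * φ x) x - f x|) ≤ σ := by
      apply ciSup_le
      intro x
      simp only [add_sub_cancel_left]
      rw [abs_mul, abs_of_pos hσpos]
      calc σ * |φ x| ≤ σ * 1 := by
            apply mul_le_mul_of_nonneg_left _ hσpos.le
            rw [abs_of_nonneg (φ.nonneg)]
            exact φ.le_one
        _ = σ := mul_one σ
    have h2 : (⨆ x : ℝ, |deriv (fun x => f x + σ * φ x) x - deriv f x|) ≤ σ * M := by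
      apply ciSup_le
      intro x
      rw [hderiv x]
      simp only [add_sub_cancel_left]
      rw [abs_mul, abs_of_pos hσpos]
      exact mul_le_mul_of_nonneg_left (hM x) hσpos.le
    have : σ * (M + 1) = ε / 2 := by
      field_simp [hσdef]
      have h := div_mul_cancel₀ ε (show (2 * (M + 1)) ≠ 0 from (by linarith : (0:ℝ) < 2 * (M + 1)).ne')
      rw [← hσdef] at h
      linear_combination h
    calc (⨆ x : ℝ, |(fun x => f x + σ * φ x) x - f x|) +
          (⨆ x : ℝ, |deriv (fun x => f x + σ * φ x) x - deriv f x|)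
        ≤ σ + σ * M := add_le_add h1 h2
      _ = σ * (M + 1) := by ring
      _ = ε / 2 := this
      _ < ε := by linarith
  · intro x hx
    have hx' : x ∉ Metric.ball x₀ (3*δ/4) := by
      intro hmem
      apply hx
      rw [Real.ball_eq_Ioo] at hmem
      constructor
      · linarith [hmem.1]
      · linarith [hmem.2]
    have : φ x = 0 := by
      have := φ.support_eq
      rw [← Function.notMem_support, this]
      exact hx'
    simp [this]
  · intro x hx
    show 0 < f x + σ * φ x
    rcases eq_or_ne x x₀ with h | h
    · subst h
      have h1 : φ x = 1 := φ.one_of_mem_closedBall (by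
        simp [Metric.mem_closedBall, dist_self]; linarith [φ.rIn_pos])
      rw [hz, h1, mul_one, zero_add]
      exact hσpos
    · have hfx := hpos x hx h
      have : 0 ≤ σ * φ x := mul_nonneg hσpos.le φ.nonneg
      linarith
end

section
/- For the function f(x) = (x - x*)³, for every ε > 0 there exists a C¹ function g with ‖g - f‖ in C¹-norm on [x*-δ, x*+δ] less than ε such that g has exactly three zeros in (x*-δ, x*+δ), all hyperbolic, with g'(x*) < 0 at the middle zero x* and g' > 0 at the two outer zeros. -/
theorem cubic_perturbed_three_hyperbolic_zeros (x₀ δ : ℝ) (hδ : 0 < δ) :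
    ∀ ε > (0 : ℝ), ∃ g : ℝ → ℝ, ContDiff ℝ 1 g ∧
      (⨆ x : Set.Icc (x₀ - δ) (x₀ + δ),
        |g x - (x - x₀) ^ 3| + |deriv g x - deriv (fun y => (y - x₀) ^ 3) x|) < ε ∧
      ∃ a b : ℝ, a ∈ Set.Ioo (x₀ - δ) (x₀ + δ) ∧ b ∈ Set.Ioo (x₀ - δ) (x₀ + δ) ∧
        a < x₀ ∧ x₀ < b ∧
        {y ∈ Set.Ioo (x₀ - δ) (x₀ + δ) | g y = 0} = {a, x₀, b} ∧
        deriv g x₀ < 0 ∧ 0 < deriv g a ∧ 0 < deriv g b := by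
  intro ε hε
  set c : ℝ := min (ε / (2 * (δ + 1))) (δ ^ 2 / 2) with hc
  have hδ1 : (0:ℝ) < δ + 1 := by linarith
  have hc0 : 0 < c := lt_min (by positivity) (by positivity)
  have hcε : c * (δ + 1) < ε := by
    have : c ≤ ε / (2 * (δ + 1)) := min_le_left _ _
    have h3 := mul_le_mul_of_nonneg_right this hδ1.le
    have h4 : ε / (2 * (δ + 1)) * (δ + 1) = ε / 2 := by field_simp
    linarith
  set s : ℝ := Real.sqrt c with hs
  have hs0 : 0 < s := Real.sqrt_pos.2 hc0
  have hs2 : s ^ 2 = c := Real.sq_sqrt hc0.le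
  have hsδ : s < δ := by
    nlinarith [min_le_right (ε / (2 * (δ + 1))) (δ ^ 2 / 2), hs2]
  refine ⟨fun x => (x - x₀) ^ 3 - c * (x - x₀), ?_, ?_, x₀ - s, x₀ + s, ?_, ?_, by linarith, by linarith, ?_, ?_, ?_, ?_⟩
  · fun_prop
  · have hf' : ∀ x : ℝ, deriv (fun y => (y - x₀) ^ 3) x = 3 * (x - x₀) ^ 2 := by
      intro x
      have h1 : HasDerivAt (fun y : ℝ => y - x₀) 1 x := (hasDerivAt_id x).sub_const x₀
      have := h1.pow 3
      simp [this.deriv]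
    have hg' : ∀ x : ℝ, deriv (fun y => (y - x₀) ^ 3 - c * (y - x₀)) x = 3 * (x - x₀) ^ 2 - c := by
      intro x
      have h1 : HasDerivAt (fun y : ℝ => y - x₀) 1 x := (hasDerivAt_id x).sub_const x₀
      have h2 := (h1.pow 3).sub (h1.const_mul c)
      have h3 : HasDerivAt (fun y => (y - x₀) ^ 3 - c * (y - x₀)) (3 * (x - x₀) ^ 2 - c) x := by
        exact h2.congr_deriv (by norm_num)
      exact h3.deriv
    haveI : Nonempty (Set.Icc (x₀ - δ) (x₀ + δ)) :=
      (Set.nonempty_Icc.2 (by linarith)).to_subtype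
    calc (⨆ x : Set.Icc (x₀ - δ) (x₀ + δ),
        |((x:ℝ) - x₀) ^ 3 - c * ((x:ℝ) - x₀) - ((x:ℝ) - x₀) ^ 3| +
          |deriv (fun y => (y - x₀) ^ 3 - c * (y - x₀)) x - deriv (fun y => (y - x₀) ^ 3) x|)
        ≤ c * (δ + 1) := by
          apply ciSup_le
          intro ⟨x, hx⟩
          simp only [hf', hg']
          have hx1 : |x - x₀| ≤ δ := abs_le.2 ⟨by linarith [hx.1], by linarith [hx.2]⟩
          calc |(x - x₀) ^ 3 - c * (x - x₀) - (x - x₀) ^ 3| + |3 * (x - x₀) ^ 2 - c - 3 * (x - x₀) ^ 2|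
              = c * |x - x₀| + c := by
                rw [show (x - x₀) ^ 3 - c * (x - x₀) - (x - x₀) ^ 3 = -(c * (x - x₀)) by ring,
                    show 3 * (x - x₀) ^ 2 - c - 3 * (x - x₀) ^ 2 = -c by ring, abs_neg, abs_neg,
                    abs_mul, abs_of_pos hc0]
            _ ≤ c * δ + c := by nlinarith [abs_nonneg (x - x₀)]
            _ = c * (δ + 1) := by ring
      _ < ε := hcε
  · exact Set.mem_Ioo.2 ⟨by linarith, by linarith⟩
  · exact Set.mem_Ioo.2 ⟨by linarith, by linarith⟩
  · ext y
    simp only [Set.mem_setOf_eq, Set.mem_Ioo, Set.mem_insert_iff, Set.mem_singleton_iff]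
    constructor
    · rintro ⟨⟨h1, h2⟩, h3⟩
      have : (y - x₀ - s) * (y - x₀) * (y - x₀ + s) = 0 := by nlinarith [hs2]
      rcases mul_eq_zero.1 this with h | h
      · rcases mul_eq_zero.1 h with h | h
        · right; right; linarith
        · right; left; linarith
      · left; linarith
    · rintro (rfl | rfl | rfl)
      · exact ⟨⟨by linarith, by linarith⟩, by nlinarith [hs2]⟩
      · exact ⟨⟨by linarith, by linarith⟩, by ring⟩
      · exact ⟨⟨by linarith, by linarith⟩, by nlinarith [hs2]⟩
  all_goals {
    have hg' : ∀ x : ℝ, deriv (fun y => (y - x₀) ^ 3 - c * (y - x₀)) x = 3 * (x - x₀) ^ 2 - c := by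
      intro x
      have h1 : HasDerivAt (fun y : ℝ => y - x₀) 1 x := (hasDerivAt_id x).sub_const x₀
      have h2 := (h1.pow 3).sub (h1.const_mul c)
      have h3 : HasDerivAt (fun y => (y - x₀) ^ 3 - c * (y - x₀)) (3 * (x - x₀) ^ 2 - c) x := by
        exact h2.congr_deriv (by norm_num)
      exact h3.deriv
    rw [hg']
    nlinarith [hs2]
  }
end
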